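/- Let A be a commutative Noetherian ring and let p be a prime ideal of A containing a nonzerodivisor. If p = \overline{IJ} for integrally closed ideals I, J of A each containing a nonzerodivisor, then I = (1) or J = (1). That is, every prime ideal in ic(A) is a *-irreducible element of the monoid ic(A). -/

import Mathlib

open Pointwise

/-- `x` satisfies an equation of integral dependence over the ideal `I`:
`x ^ n + a 1 * x ^ (n-1) + ⋯ + a (n-1) * x + a n = 0` with `a i ∈ I ^ i`. -/
def IsIntegralOverIdeal {A : Type*} [CommRing A] (I : Ideal A) (x : A) : Prop :=
  ∃ n : ℕ, 0 < n ∧ ∃ a : ℕ → A, (∀ i, 1 ≤ i → i ≤ n → a i ∈ I ^ i) ∧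
    x ^ n + ∑ i ∈ Finset.Icc 1 n, a i * x ^ (n - i) = 0

/-- The integral closure `\overline{I}` of an ideal `I`.  The set of elements integral
over `I` is in fact an ideal, so taking the ideal span of this set does not change it. -/
def intCl {A : Type*} [CommRing A] (I : Ideal A) : Ideal A :=
  Ideal.span {x | IsIntegralOverIdeal I x}

lemma le_intCl {A : Type*} [CommRing A] (I : Ideal A) : I ≤ intCl I := by
  intro x hx
  apply Ideal.subset_span
  refine ⟨1, one_pos, fun i => if i = 1 then -x else 0, ?_, ?_⟩
  · intro i h1 h2
    have : i = 1 := le_antisymm h2 h1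
    subst this
    simpa using I.neg_mem hx
  · simp

lemma intCl_mono {A : Type*} [CommRing A] {I J : Ideal A} (h : I ≤ J) :
    intCl I ≤ intCl J := by
  apply Ideal.span_mono
  rintro x ⟨n, hn, a, ha, heq⟩
  exact ⟨n, hn, a, fun i h1 h2 => Ideal.pow_right_mono h i (ha i h1 h2), heq⟩

lemma pow_mem_of_integral {A : Type*} [CommRing A] {p J : Ideal A} {x : A} (hx : x ∈ p)
    (hint : IsIntegralOverIdeal (p * J) x) : ∃ n, 1 ≤ n ∧ x ^ n ∈ J * p ^ n := by
  obtain ⟨n, hn, a, ha, heq⟩ := hint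
  refine ⟨n, hn, ?_⟩
  have hxe : x ^ n = -∑ i ∈ Finset.Icc 1 n, a i * x ^ (n - i) := by
    rw [eq_neg_iff_add_eq_zero]; exact heq
  rw [hxe]
  apply neg_mem
  apply Ideal.sum_mem
  intro i hi
  obtain ⟨h1, h2⟩ := Finset.mem_Icc.mp hi
  have hai : a i ∈ J * p ^ i := by
    have h3 : (p * J) ^ i ≤ J * p ^ i := by
      rw [mul_pow, mul_comm]
      exact Ideal.mul_mono (Ideal.pow_le_self (by omega)) le_rfl
    exact h3 (ha i h1 h2)
  have hxp : x ^ (n - i) ∈ p ^ (n - i) := Ideal.pow_mem_pow hx _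
  have hmul : a i * x ^ (n - i) ∈ (J * p ^ i) * p ^ (n - i) := Ideal.mul_mem_mul hai hxp
  rwa [mul_assoc, ← pow_add, Nat.add_sub_cancel' h2] at hmul

lemma prod_mem_pow_card {A : Type*} [CommRing A] {ι : Type*} (p : Ideal A) (s : Finset ι)
    (f : ι → A) (hf : ∀ i ∈ s, f i ∈ p) : (∏ i ∈ s, f i) ∈ p ^ s.card := by
  classical
  induction s using Finset.induction_on with
  | empty => simp
  | @insert a s hns ih =>
    rw [Finset.prod_insert hns, Finset.card_insert_of_notMem hns, pow_succ, mul_comm]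
    exact Ideal.mul_mem_mul (hf a (Finset.mem_insert_self a s))
      (ih fun i hi => hf i (Finset.mem_insert_of_mem hi))

lemma pow_le_mul_pow {A : Type*} [CommRing A] (p J : Ideal A) (T : Finset A)
    (hT : Ideal.span T = p) (n : ℕ) (hn : 1 ≤ n) (h : ∀ t ∈ T, t ^ n ∈ J * p ^ n) :
    p ^ (T.card * (n - 1) + 1) ≤ J * p ^ (T.card * (n - 1) + 1) := by
  classical
  set M := T.card * (n - 1) + 1 with hM
  have hsp : p ^ M = Ideal.span ((T : Set A) ^ M) := by
    rw [← hT]; exact Submodule.span_pow _ _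
  refine le_trans (le_of_eq hsp) (Ideal.span_le.mpr ?_)
  intro x hx
  rw [Set.mem_pow] at hx
  obtain ⟨f, hf⟩ := hx
  have hfx : ∏ i : Fin M, (f i : A) = x := by
    rw [← hf, List.prod_ofFn]
  have hmem : ∀ i : Fin M, (f i : A) ∈ T := fun i => (f i).2
  have hcard : ∑ t ∈ T, (Finset.univ.filter fun i : Fin M => (f i : A) = t).card = M := by
    rw [← Finset.card_eq_sum_card_fiberwise (fun i _ => hmem i)]
    simp
  have hpigeon : ∃ t ∈ T, n ≤ (Finset.univ.filter fun i : Fin M => (f i : A) = t).card := by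
    by_contra hc
    push_neg at hc
    have hle : ∑ t ∈ T, (Finset.univ.filter fun i : Fin M => (f i : A) = t).card
        ≤ ∑ _t ∈ T, (n - 1) := by
      apply Finset.sum_le_sum
      intro t ht
      have := hc t ht
      omega
    rw [hcard, Finset.sum_const, smul_eq_mul] at hle
    omega
  obtain ⟨t, htT, htn⟩ := hpigeon
  set s := Finset.univ.filter fun i : Fin M => (f i : A) = t with hs
  have hsc : s.card ≤ M := by
    have := Finset.card_le_card (Finset.filter_subset (fun i : Fin M => (f i : A) = t)
      Finset.univ)
    simpa [hs] using this
  have hTp : (T : Set A) ⊆ p := by rw [← hT]; exact Ideal.subset_span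
  have hsplit : x = t ^ s.card *
      ∏ i ∈ Finset.univ.filter (fun i : Fin M => ¬ ((f i : A) = t)), (f i : A) := by
    rw [← hfx,
      ← Finset.prod_filter_mul_prod_filter_not Finset.univ (fun i : Fin M => (f i : A) = t)]
    congr 1
    rw [Finset.prod_congr rfl (fun i hi => (Finset.mem_filter.mp hi).2), Finset.prod_const]
  have hrest : (∏ i ∈ Finset.univ.filter (fun i : Fin M => ¬ ((f i : A) = t)), (f i : A))
      ∈ p ^ (M - s.card) := by
    have hcc : (Finset.univ.filter fun i : Fin M => ¬ ((f i : A) = t)).card = M - s.card := by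
      rw [Finset.filter_not, Finset.card_sdiff_of_subset (Finset.filter_subset _ _), Finset.card_univ,
        Fintype.card_fin]
    rw [← hcc]
    exact prod_mem_pow_card p _ _ (fun i _ => hTp (hmem i))
  have htp : t ∈ p := hTp htT
  have hx' : x ∈ (J * p ^ n) * (p ^ (s.card - n) * p ^ (M - s.card)) := by
    rw [hsplit]
    have ht2 : t ^ s.card = t ^ n * t ^ (s.card - n) := by
      rw [← pow_add, Nat.add_sub_cancel' htn]
    rw [ht2, mul_assoc (t ^ n)]
    exact Ideal.mul_mem_mul (h t htT)
      (Ideal.mul_mem_mul (Ideal.pow_mem_pow htp _) hrest)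
  rwa [← pow_add, mul_assoc, ← pow_add,
    show n + (s.card - n + (M - s.card)) = M by omega] at hx'

lemma core_lemma {A : Type*} [CommRing A] [IsNoetherianRing A] (p J : Ideal A)
    (hpnzd : ∃ r ∈ p, r ∈ nonZeroDivisors A)
    (h : p = intCl (p * J)) : J = ⊤ := by
  classical
  obtain ⟨r, hrp, hrnzd⟩ := hpnzd
  set S : Set A := {x | IsIntegralOverIdeal (p * J) x} with hS
  have hspanS : Ideal.span S = p := h.symm
  have hSp : S ⊆ (p : Set A) := by
    intro x hx; rw [← hspanS]; exact Ideal.subset_span hx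
  obtain ⟨G, hG⟩ := IsNoetherian.noetherian p
  have hmem : ∀ g ∈ G, ∃ Tg : Finset A, ↑Tg ⊆ S ∧ g ∈ Ideal.span (Tg : Set A) := by
    intro g hg
    have : g ∈ Ideal.span S := by
      rw [hspanS, ← hG]; exact Ideal.subset_span hg
    exact Submodule.mem_span_finite_of_mem_span this
  choose Tf hTf1 hTf2 using hmem
  set T : Finset A := G.attach.biUnion (fun g => Tf g.1 g.2) with hTdef
  have hTS : (T : Set A) ⊆ S := by
    intro x hx
    simp only [hTdef, Finset.coe_biUnion, Set.mem_iUnion, Finset.mem_coe] at hx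
    obtain ⟨g, hg, hx⟩ := hx
    exact hTf1 g.1 g.2 hx
  have hspanT : Ideal.span (T : Set A) = p := by
    apply le_antisymm
    · rw [← hspanS]; exact Ideal.span_mono hTS
    · rw [← hG]
      apply Submodule.span_le.mpr
      intro g hg
      have hsub : (Tf g hg : Set A) ⊆ (T : Set A) := by
        intro y hy
        simp only [hTdef, Finset.coe_biUnion, Set.mem_iUnion, Finset.mem_coe]
        exact ⟨⟨g, hg⟩, Finset.mem_attach _ _, hy⟩
      exact Ideal.span_mono hsub (hTf2 g hg)
  have hkey : ∀ t ∈ T, ∃ m, 1 ≤ m ∧ t ^ m ∈ J * p ^ m := by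
    intro t ht
    exact pow_mem_of_integral (hSp (hTS ht)) (hTS ht)
  choose nf hnf1 hnf2 using hkey
  set n : ℕ := T.attach.sup (fun t => nf t.1 t.2) + 1 with hn
  have hn1 : 1 ≤ n := Nat.le_add_left 1 _
  have hTn : ∀ t ∈ T, t ^ n ∈ J * p ^ n := by
    intro t ht
    have h3 : nf t ht ≤ n :=
      le_trans (Finset.le_sup (f := fun t : {x // x ∈ T} => nf t.1 t.2) (Finset.mem_attach T ⟨t, ht⟩)) (Nat.le_succ _)
    have ht2 : t ^ n = t ^ nf t ht * t ^ (n - nf t ht) := by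
      rw [← pow_add, Nat.add_sub_cancel' h3]
    have hmul : t ^ nf t ht * t ^ (n - nf t ht) ∈ (J * p ^ nf t ht) * p ^ (n - nf t ht) :=
      Ideal.mul_mem_mul (hnf2 t ht) (Ideal.pow_mem_pow (hSp (hTS ht)) _)
    rw [ht2]
    rwa [mul_assoc, ← pow_add, Nat.add_sub_cancel' h3] at hmul
  set M := T.card * (n - 1) + 1 with hM
  have hle : p ^ M ≤ J * p ^ M := pow_le_mul_pow p J T hspanT n hn1 hTn
  have hle' : p ^ M ≤ J • p ^ M := by rwa [Ideal.smul_eq_mul]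
  obtain ⟨c, hc1, hc2⟩ :=
    Submodule.exists_sub_one_mem_and_smul_eq_zero_of_fg_of_le_smul J (p ^ M)
      (IsNoetherian.noetherian _) hle'
  have hcr : c * r ^ M = 0 := by
    have := hc2 (r ^ M) (Ideal.pow_mem_pow hrp M)
    simpa [smul_eq_mul] using this
  have hc0 : c = 0 := (pow_mem hrnzd M).2 c hcr
  rw [hc0] at hc1
  have : (-1 : A) ∈ J := by simpa using hc1
  rw [Ideal.eq_top_iff_one]
  simpa using J.neg_mem this

/-- Prime ideals in `ic(A)` are `*`-irreducible. -/
theorem prime_starIrreducible {A : Type*} [CommRing A] [IsNoetherianRing A] (p I J : Ideal A)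
    (hp : p.IsPrime) (hpnzd : ∃ r ∈ p, r ∈ nonZeroDivisors A)
    (hIc : intCl I = I) (hInzd : ∃ r ∈ I, r ∈ nonZeroDivisors A)
    (hJc : intCl J = J) (hJnzd : ∃ r ∈ J, r ∈ nonZeroDivisors A)
    (h : p = intCl (I * J)) : I = ⊤ ∨ J = ⊤ := by
  have hIJp : I * J ≤ p := by rw [h]; exact le_intCl _
  have hpI : p ≤ I := by rw [h]; exact le_trans (intCl_mono Ideal.mul_le_left) (le_of_eq hIc)
  have hpJ : p ≤ J := by rw [h]; exact le_trans (intCl_mono Ideal.mul_le_right) (le_of_eq hJc)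
  rcases hp.mul_le.mp hIJp with hIp | hJp
  · have hI : I = p := le_antisymm hIp hpI
    rw [hI] at h
    exact Or.inr (core_lemma p J hpnzd h)
  · have hJ : J = p := le_antisymm hJp hpJ
    rw [hJ, mul_comm] at h
    exact Or.inl (core_lemma p I hpnzd h)
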